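/- For every κ ∈ ℝ, all complex roots of the polynomial Q - κP are real. -/

import Mathlib

open Polynomial MeasureTheory intervalIntegral

lemma stmt6_aux (n : ℕ) (a b : Fin n → ℝ)
    (ha0 : ∀ j, 0 < a j) (hab : ∀ j, a j < b j)
    (hsep : ∀ j k : Fin n, j < k → b k < a j)
    (T : Polynomial ℝ) (hT : T = X * ∏ j, (X - C (a j)) * (X - C (b j)))
    (k : Fin n) :
    (∀ x ∈ Set.Ioo (a k) (b k), 0 < -(T.eval x)) ∧
    (∀ p : Polynomial ℝ,
      IntervalIntegrable (fun x => p.eval x / Real.sqrt (-(T.eval x))) volume (a k) (b k)) := by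
  set c := a k with hc
  set d := b k with hd
  have hcd : c < d := hab k
  set S : Polynomial ℝ := X * ∏ j ∈ Finset.univ.erase k, (X - C (a j)) * (X - C (b j)) with hS
  have hTS : T = (X - C c) * (X - C d) * S := by
    rw [hT, ← Finset.mul_prod_erase Finset.univ _ (Finset.mem_univ k), hS]
    ring
  have hTe : ∀ x : ℝ, T.eval x = (x - c) * (x - d) * S.eval x := by
    intro x; rw [hTS]; simp
  have hSpos : ∀ x ∈ Set.Icc c d, 0 < S.eval x := by
    intro x hx
    rw [hS]
    simp only [eval_mul, eval_X, eval_prod, eval_sub, eval_C]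
    apply mul_pos (lt_of_lt_of_le (ha0 k) hx.1)
    apply Finset.prod_pos
    intro j hj
    have hjk : j ≠ k := Finset.ne_of_mem_erase hj
    rcases lt_or_gt_of_ne hjk with h | h
    · have h1 : b k < a j := hsep j k h
      have h2 := hab j
      have h3 := hx.2
      exact mul_pos_of_neg_of_neg (by simp only [← hd] at h1 ⊢; linarith) (by simp only [← hd] at h1 ⊢; linarith)
    · have h1 : b j < a k := hsep k j h
      have h2 := hx.1
      apply mul_pos <;> [skip; skip] <;> · simp only [← hc] at h1 ⊢; linarith [hab j]
  have hTpos : ∀ x ∈ Set.Ioo c d, 0 < -(T.eval x) := by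
    intro x hx
    rw [hTe]
    have h1 : 0 < (x - c) * (d - x) * S.eval x :=
      mul_pos (mul_pos (sub_pos.2 hx.1) (sub_pos.2 hx.2))
        (hSpos x (Set.mem_Icc.2 ⟨hx.1.le, hx.2.le⟩))
    nlinarith [h1]
  refine ⟨hTpos, fun p => ?_⟩
  -- min of S on Icc
  obtain ⟨x0, hx0mem, hx0min⟩ := isCompact_Icc.exists_isMinOn (Set.nonempty_Icc.2 hcd.le)
    ((Polynomial.continuous S).continuousOn (s := Set.Icc c d))
  set ε := S.eval x0 with hε
  have hεpos : 0 < ε := hSpos x0 hx0mem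
  have hεle : ∀ x ∈ Set.Icc c d, ε ≤ S.eval x := fun x hx => hx0min hx
  -- max of |p.eval| on Icc
  obtain ⟨y0, hy0mem, hy0max⟩ := isCompact_Icc.exists_isMaxOn (Set.nonempty_Icc.2 hcd.le)
    ((continuous_abs.comp (Polynomial.continuous p)).continuousOn (s := Set.Icc c d))
  set M := |p.eval y0| with hM
  have hM0 : 0 ≤ M := abs_nonneg _
  have hMle : ∀ x ∈ Set.Icc c d, |p.eval x| ≤ M := fun x hx => hy0max hx
  have hmeas : Measurable (fun x => p.eval x / Real.sqrt (-(T.eval x))) :=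
    (Polynomial.continuous p).measurable.div
      (Real.continuous_sqrt.measurable.comp (Polynomial.continuous T).measurable.neg)
  set m := (c + d) / 2 with hm
  have hcm : c < m := by rw [hm]; linarith
  have hmd : m < d := by rw [hm]; linarith
  -- left half
  have hleft : IntervalIntegrable (fun x => p.eval x / Real.sqrt (-(T.eval x))) volume c m := by
    have hbase : IntervalIntegrable (fun x : ℝ => x ^ (-(1/2) : ℝ)) volume 0 (m - c) :=
      intervalIntegral.intervalIntegrable_rpow' (by norm_num)
    have hshift := (hbase.comp_sub_right c).const_mul (M / Real.sqrt ((d - m) * ε))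
    rw [zero_add, sub_add_cancel] at hshift
    refine hshift.mono_fun hmeas.aestronglyMeasurable ?_
    rw [Set.uIoc_of_le hcm.le]
    filter_upwards [MeasureTheory.self_mem_ae_restrict measurableSet_Ioc] with x hx
    obtain ⟨hxc, hxm⟩ := hx
    have hxd : x < d := lt_of_le_of_lt hxm hmd
    have hxc' : 0 < x - c := by linarith
    have hu : 0 < (d - m) * ε := mul_pos (by linarith) hεpos
    have hlow : (x - c) * ((d - m) * ε) ≤ -(T.eval x) := by
      have hs := hεle x ⟨hxc.le, hxd.le⟩
      have h2 : (d - m) * ε ≤ (d - x) * S.eval x :=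
        mul_le_mul (by linarith) hs hεpos.le (by linarith)
      have h3 : (x - c) * ((d - m) * ε) ≤ (x - c) * ((d - x) * S.eval x) :=
        mul_le_mul_of_nonneg_left h2 hxc'.le
      rw [hTe]; nlinarith [h3]
    have hsqrt : Real.sqrt ((x - c) * ((d - m) * ε)) ≤ Real.sqrt (-(T.eval x)) :=
      Real.sqrt_le_sqrt hlow
    rw [Real.sqrt_mul hxc'.le] at hsqrt
    have hsx : 0 < Real.sqrt (x - c) := Real.sqrt_pos.2 hxc'
    have hsu : 0 < Real.sqrt ((d - m) * ε) := Real.sqrt_pos.2 hu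
    have hrpow : (x - c) ^ (-(1/2) : ℝ) = (Real.sqrt (x - c))⁻¹ := by
      rw [Real.sqrt_eq_rpow, ← Real.rpow_neg hxc'.le]
    have hRHS : M / Real.sqrt ((d - m) * ε) * (x - c) ^ (-(1/2) : ℝ)
        = M / (Real.sqrt (x - c) * Real.sqrt ((d - m) * ε)) := by
      rw [hrpow]; field_simp
    calc ‖p.eval x / Real.sqrt (-(T.eval x))‖
        = |p.eval x| / Real.sqrt (-(T.eval x)) := by
          rw [Real.norm_eq_abs, abs_div, abs_of_nonneg (Real.sqrt_nonneg _)]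
      _ ≤ M / (Real.sqrt (x - c) * Real.sqrt ((d - m) * ε)) :=
          div_le_div₀ hM0 (hMle x ⟨hxc.le, hxd.le⟩) (mul_pos hsx hsu) hsqrt
      _ = M / Real.sqrt ((d - m) * ε) * (x - c) ^ (-(1/2) : ℝ) := hRHS.symm
      _ ≤ ‖M / Real.sqrt ((d - m) * ε) * (x - c) ^ (-(1/2) : ℝ)‖ := le_abs_self _
  -- right half
  have hright : IntervalIntegrable (fun x => p.eval x / Real.sqrt (-(T.eval x))) volume m d := by
    have hbase : IntervalIntegrable (fun x : ℝ => x ^ (-(1/2) : ℝ)) volume 0 (d - m) :=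
      intervalIntegral.intervalIntegrable_rpow' (by norm_num)
    have hshift := ((hbase.comp_sub_left d).const_mul (M / Real.sqrt ((m - c) * ε))).symm
    rw [sub_zero, sub_sub_cancel] at hshift
    refine hshift.mono_fun hmeas.aestronglyMeasurable ?_
    rw [Set.uIoc_of_le hmd.le]
    filter_upwards [MeasureTheory.self_mem_ae_restrict measurableSet_Ioc] with x hx
    obtain ⟨hxm, hxd⟩ := hx
    have hxc : c < x := lt_trans hcm hxm
    rcases eq_or_lt_of_le hxd with heq | hxd'
    · have hT0 : T.eval x = 0 := by rw [hTe, heq]; ring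
      rw [hT0, neg_zero, Real.sqrt_zero, div_zero]
      simp only [norm_zero]; exact norm_nonneg _
    · have hxd0 : 0 < d - x := by linarith
      have hu : 0 < (m - c) * ε := mul_pos (by linarith) hεpos
      have hlow : (d - x) * ((m - c) * ε) ≤ -(T.eval x) := by
        have hs := hεle x ⟨hxc.le, hxd'.le⟩
        have h2 : (m - c) * ε ≤ (x - c) * S.eval x :=
          mul_le_mul (by linarith) hs hεpos.le (by linarith)
        have h3 : (d - x) * ((m - c) * ε) ≤ (d - x) * ((x - c) * S.eval x) :=
          mul_le_mul_of_nonneg_left h2 hxd0.le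
        rw [hTe]; nlinarith [h3]
      have hsqrt : Real.sqrt ((d - x) * ((m - c) * ε)) ≤ Real.sqrt (-(T.eval x)) :=
        Real.sqrt_le_sqrt hlow
      rw [Real.sqrt_mul hxd0.le] at hsqrt
      have hsx : 0 < Real.sqrt (d - x) := Real.sqrt_pos.2 hxd0
      have hsu : 0 < Real.sqrt ((m - c) * ε) := Real.sqrt_pos.2 hu
      have hrpow : (d - x) ^ (-(1/2) : ℝ) = (Real.sqrt (d - x))⁻¹ := by
        rw [Real.sqrt_eq_rpow, ← Real.rpow_neg hxd0.le]
      have hRHS : M / Real.sqrt ((m - c) * ε) * (d - x) ^ (-(1/2) : ℝ)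
          = M / (Real.sqrt (d - x) * Real.sqrt ((m - c) * ε)) := by
        rw [hrpow]; field_simp
      calc ‖p.eval x / Real.sqrt (-(T.eval x))‖
          = |p.eval x| / Real.sqrt (-(T.eval x)) := by
            rw [Real.norm_eq_abs, abs_div, abs_of_nonneg (Real.sqrt_nonneg _)]
        _ ≤ M / (Real.sqrt (d - x) * Real.sqrt ((m - c) * ε)) :=
            div_le_div₀ hM0 (hMle x ⟨hxc.le, hxd'.le⟩) (mul_pos hsx hsu) hsqrt
        _ = M / Real.sqrt ((m - c) * ε) * (d - x) ^ (-(1/2) : ℝ) := hRHS.symm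
        _ ≤ ‖M / Real.sqrt ((m - c) * ε) * (d - x) ^ (-(1/2) : ℝ)‖ := le_abs_self _
  exact hleft.trans hright

/-- For every `κ ∈ ℝ`, all complex roots of `Q - κP` are real. -/
theorem stmt_6 (n : ℕ) (hn : 1 ≤ n) (a b : Fin n → ℝ)
    (ha0 : ∀ j, 0 < a j) (hab : ∀ j, a j < b j)
    (hsep : ∀ j k : Fin n, j < k → b k < a j)
    (T : Polynomial ℝ) (hT : T = X * ∏ j, (X - C (a j)) * (X - C (b j)))
    (P : Polynomial ℝ) (hPmonic : P.Monic) (hPdeg : P.natDegree = n)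
    (hPint : ∀ k, ∫ x in (a k)..(b k), P.eval x / Real.sqrt (-(T.eval x)) = 0)
    (P1 : Polynomial ℝ) (hP1monic : P1.Monic) (hP1deg : P1.natDegree = n)
    (Q : Polynomial ℝ) (hQ : Q = X * P1)
    (hQint : ∀ k, ∫ x in (a k)..(b k), Q.eval x / Real.sqrt (-(T.eval x)) = 0) :
    ∀ κ : ℝ, ∀ z : ℂ, (Polynomial.aeval z) (Q - C κ * P) = 0 → z.im = 0 := by
  intro κ z hz
  by_contra him
  set f : Polynomial ℝ := Q - C κ * P with hf
  have hP0 : P ≠ 0 := hPmonic.ne_zero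
  have hQmonic : Q.Monic := by rw [hQ]; exact monic_X.mul hP1monic
  have hQdeg : Q.natDegree = n + 1 := by
    rw [hQ, natDegree_mul X_ne_zero hP1monic.ne_zero, natDegree_X, hP1deg]
    omega
  have hdegCP : (C κ * P).degree < Q.degree := by
    calc (C κ * P).degree ≤ (C κ).degree + P.degree := degree_mul_le _ _
      _ ≤ 0 + P.degree := add_le_add degree_C_le le_rfl
      _ = P.degree := zero_add _
      _ < Q.degree := by
          rw [degree_eq_natDegree hP0, degree_eq_natDegree hQmonic.ne_zero, hPdeg, hQdeg]
          exact_mod_cast Nat.lt_succ_self n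
  have hfmonic : f.Monic := hQmonic.sub_of_left hdegCP
  have hfdeg : f.natDegree = n + 1 := by
    rw [hf, natDegree_eq_of_degree_eq (degree_sub_eq_left_of_degree_lt hdegCP), hQdeg]
  -- existence of a root in each gap
  have hroot : ∀ k : Fin n, ∃ r ∈ Set.Icc (a k) (b k), f.eval r = 0 := by
    intro k
    obtain ⟨hTpos, hint⟩ := stmt6_aux n a b ha0 hab hsep T hT k
    by_contra hcon
    push_neg at hcon
    have hint0 : ∫ x in (a k)..(b k), f.eval x / Real.sqrt (-(T.eval x)) = 0 := by
      have heq : ∀ x : ℝ, f.eval x / Real.sqrt (-(T.eval x)) =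
          Q.eval x / Real.sqrt (-(T.eval x)) - κ * (P.eval x / Real.sqrt (-(T.eval x))) := by
        intro x
        rw [hf]
        simp only [eval_sub, eval_mul, eval_C]
        rw [sub_div, mul_div_assoc]
      rw [intervalIntegral.integral_congr (fun x _ => heq x),
        intervalIntegral.integral_sub (hint Q) ((hint P).const_mul κ),
        intervalIntegral.integral_const_mul, hQint k, hPint k]
      ring
    have hfc : Continuous fun x => f.eval x := Polynomial.continuous f
    have hsign : (∀ x ∈ Set.Icc (a k) (b k), 0 < f.eval x) ∨
        (∀ x ∈ Set.Icc (a k) (b k), f.eval x < 0) := by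
      by_contra hcon2
      push_neg at hcon2
      obtain ⟨⟨x1, hx1, hx1'⟩, ⟨x2, hx2, hx2'⟩⟩ := hcon2
      have hx1'' : f.eval x1 ≤ 0 := hx1'
      have hx2'' : 0 ≤ f.eval x2 := hx2'
      have hsub : Set.uIcc x1 x2 ⊆ Set.Icc (a k) (b k) := by
        rw [Set.uIcc_eq_union]
        exact Set.union_subset (Set.Icc_subset_Icc hx1.1 hx2.2)
          (Set.Icc_subset_Icc hx2.1 hx1.2)
      have h0mem : (0:ℝ) ∈ Set.uIcc (f.eval x1) (f.eval x2) :=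
        Set.mem_uIcc.2 (Or.inl ⟨hx1'', hx2''⟩)
      obtain ⟨r, hr, hr0⟩ := intermediate_value_uIcc (hfc.continuousOn) h0mem
      exact hcon r (hsub hr) hr0
    rcases hsign with hpos | hneg
    · have hgt : 0 < ∫ x in (a k)..(b k), f.eval x / Real.sqrt (-(T.eval x)) := by
        apply intervalIntegral_pos_of_pos_on (hint f) _ (hab k)
        intro x hx
        exact div_pos (hpos x ⟨hx.1.le, hx.2.le⟩) (Real.sqrt_pos.2 (hTpos x hx))
      rw [hint0] at hgt
      exact lt_irrefl 0 hgt
    · have hgt : 0 < ∫ x in (a k)..(b k), -(f.eval x / Real.sqrt (-(T.eval x))) := by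
        apply intervalIntegral_pos_of_pos_on (hint f).neg _ (hab k)
        intro x hx
        have h1 := hneg x ⟨hx.1.le, hx.2.le⟩
        have h2 := Real.sqrt_pos.2 (hTpos x hx)
        exact neg_pos.2 (div_neg_of_neg_of_pos h1 h2)
      rw [intervalIntegral.integral_neg, hint0, neg_zero] at hgt
      exact lt_irrefl 0 hgt
  choose r hrmem hrzero using hroot
  -- r is injective
  have hrinj : Function.Injective r := by
    intro j k hjk
    by_contra hne
    rcases lt_or_gt_of_ne hne with h | h
    · have h1 : b k < a j := hsep j k h
      have := (hrmem j).1
      have := (hrmem k).2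
      linarith [hjk ▸ (hrmem j).1]
    · have h1 : b j < a k := hsep k j h
      have := (hrmem k).1
      have := (hrmem j).2
      linarith [hjk ▸ (hrmem j).2]
  -- complex roots
  set F := f.map (algebraMap ℝ ℂ) with hF
  have hFmonic : F.Monic := hfmonic.map _
  have hFdeg : F.natDegree = n + 1 := by
    rw [hF, hfmonic.natDegree_map, hfdeg]
  have hF0 : F ≠ 0 := hFmonic.ne_zero
  have hzroot : z ∈ F.roots := by
    rw [mem_roots hF0]
    rw [IsRoot, hF, eval_map, ← aeval_def]
    exact hz
  have hzbar : (starRingEnd ℂ) z ∈ F.roots := by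
    rw [mem_roots hF0]
    rw [IsRoot, hF, eval_map, ← aeval_def]
    rw [Polynomial.aeval_conj, hz, map_zero]
  have hrroot : ∀ k, ((r k : ℝ) : ℂ) ∈ F.roots := by
    intro k
    rw [mem_roots hF0]
    rw [IsRoot, hF, eval_map, ← aeval_def]
    have : ((r k : ℝ) : ℂ) = algebraMap ℝ ℂ (r k) := rfl
    rw [this, aeval_algebraMap_apply]
    simp [hrzero k]
  -- finset of distinct roots
  set s : Finset ℂ := insert z (insert ((starRingEnd ℂ) z)
    (Finset.image (fun k => ((r k : ℝ) : ℂ)) Finset.univ)) with hs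
  have himinj : Function.Injective (fun k : Fin n => ((r k : ℝ) : ℂ)) := by
    intro j k h
    simp only [Complex.ofReal_inj] at h
    exact hrinj h
  have hzim : ∀ w ∈ Finset.image (fun k : Fin n => ((r k : ℝ) : ℂ)) Finset.univ, w.im = 0 := by
    intro w hw
    obtain ⟨k, _, rfl⟩ := Finset.mem_image.1 hw
    simp
  have hznot : z ∉ insert ((starRingEnd ℂ) z)
      (Finset.image (fun k : Fin n => ((r k : ℝ) : ℂ)) Finset.univ) := by
    simp only [Finset.mem_insert]
    push_neg
    constructor
    · intro h
      exact him (Complex.conj_eq_iff_im.1 h.symm)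
    · intro h
      exact him (hzim z h)
  have hzbarnot : (starRingEnd ℂ) z ∉
      Finset.image (fun k : Fin n => ((r k : ℝ) : ℂ)) Finset.univ := by
    intro h
    have := hzim _ h
    simp only [Complex.conj_im] at this
    exact him (neg_eq_zero.1 this)
  have hcard : s.card = n + 2 := by
    rw [hs, Finset.card_insert_of_notMem hznot, Finset.card_insert_of_notMem hzbarnot,
      Finset.card_image_of_injective _ himinj, Finset.card_univ, Fintype.card_fin]
  have hsub : s ⊆ F.roots.toFinset := by
    intro w hw
    rw [Multiset.mem_toFinset]
    rw [hs] at hw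
    simp only [Finset.mem_insert, Finset.mem_image] at hw
    rcases hw with rfl | rfl | ⟨k, _, rfl⟩
    · exact hzroot
    · exact hzbar
    · exact hrroot k
  have hle : s.card ≤ n + 1 := by
    calc s.card ≤ F.roots.toFinset.card := Finset.card_le_card hsub
      _ ≤ Multiset.card F.roots := Multiset.toFinset_card_le _
      _ ≤ F.natDegree := F.card_roots'
      _ = n + 1 := hFdeg
  omega
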